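/- Let L be a finite enumerable lattice, let u₁, u₂ ∈ L with tp(u₁) = tp(u₂), let r, l ∈ ℕ, and let μ be a partition. Then |S(u₁,r,μ)| = |S(u₂,r,μ)|, |S(u₁,r,l)| = |S(u₂,r,l)|, and |S(u₁,r)| = |S(u₂,r)|. -/

import Mathlib

/-- The height of an element: the greatest length of chains from `⊥` to `u`. -/
noncomputable def ht {L : Type*} [Preorder L] (u : L) : ℕ := (Order.height u).toNat

/-- An element `z` is a cycle if the interval `[⊥, z]` is a chain. -/
def IsCycle {L : Type*} [Lattice L] [BoundedOrder L] (z : L) : Prop :=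
  IsChain (· ≤ ·) (Set.Icc (⊥ : L) z)

/-- An element `z` is a dual cycle if the interval `[z, ⊤]` is a chain. -/
def IsDualCycle {L : Type*} [Lattice L] [BoundedOrder L] (z : L) : Prop :=
  IsChain (· ≤ ·) (Set.Icc z (⊤ : L))

/-- A lattice is semi-primary if every element is a join of cycles and a meet of
dual cycles. -/
def IsSemiPrimary (L : Type*) [Lattice L] [BoundedOrder L] : Prop :=
  ∀ u : L, (∃ s : Finset L, (∀ z ∈ s, IsCycle z) ∧ u = s.sup id) ∧
           (∃ s : Finset L, (∀ z ∈ s, IsDualCycle z) ∧ u = s.inf id)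

/-- A finite family of lattice elements is independent. -/
def IndepFun {L : Type*} [Lattice L] [BoundedOrder L] {n : ℕ} (z : Fin n → L) : Prop :=
  ∀ i, ((Finset.univ.erase i).sup z) ⊓ z i = ⊥

/-- A partition is (represented by) a multiset of positive natural numbers. -/
def IsPartition (μ : Multiset ℕ) : Prop := ∀ p ∈ μ, 0 < p

/-- The `i`-th largest part of a partition (0-indexed, 0 if out of range). -/
def partGet (μ : Multiset ℕ) (i : ℕ) : ℕ := ((μ.sort (· ≤ ·)).reverse).getD i 0

/-- Componentwise order on partitions: `μ ≤ λ` iff `μᵢ ≤ λᵢ` for all `i`. -/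
def PartLE (μ lam : Multiset ℕ) : Prop := ∀ i, partGet μ i ≤ partGet lam i

/-- For `λ = (sⁿ)` and `μ ≤ λ`, the partition `λ − μ = (s − μₙ, …, s − μ₁)`. -/
def partSub (s n : ℕ) (μ : Multiset ℕ) : Multiset ℕ :=
  Multiset.filter (fun x => 0 < x)
    (↑((List.range n).map (fun i => s - partGet μ i)) : Multiset ℕ)

/-- `u` has type `μ`: `u` is a join of independent nonzero cycles whose multiset of
heights equals `μ`. -/
def IsTypeOf {L : Type*} [Lattice L] [BoundedOrder L] (u : L) (μ : Multiset ℕ) : Prop :=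
  ∃ (n : ℕ) (z : Fin n → L), (∀ i, IsCycle (z i)) ∧ (∀ i, z i ≠ ⊥) ∧ IndepFun z ∧
    u = Finset.univ.sup z ∧ (↑(List.ofFn (fun i => ht (z i))) : Multiset ℕ) = μ

/-- The lattice metric `d(u,v) = h(u ∨ v) − h(u ∧ v)`. -/
noncomputable def dLat {L : Type*} [Lattice L] (u v : L) : ℕ := ht (u ⊔ v) - ht (u ⊓ v)

/-- The sphere of radius `r` centered at `u`. -/
def sph {L : Type*} [Lattice L] (u : L) (r : ℕ) : Set L := {v | dLat u v ≤ r}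

/-- The `t`-th layer of the sphere of radius `r` centered at `u`. -/
def sphH {L : Type*} [Lattice L] (u : L) (r t : ℕ) : Set L :=
  {v | dLat u v ≤ r ∧ ht v = t}

/-- The elements of type `μ` in the sphere of radius `r` centered at `u`. -/
def sphT {L : Type*} [Lattice L] [BoundedOrder L] (u : L) (r : ℕ) (μ : Multiset ℕ) :
    Set L := {v | dLat u v ≤ r ∧ IsTypeOf v μ}

/-- A finite semi-primary lattice is down-enumerable. -/
def DownEnum (L : Type*) [Lattice L] [BoundedOrder L] : Prop :=
  ∀ (u v : L) (φ μ : Multiset ℕ), IsTypeOf u φ → IsTypeOf v φ →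
    Nat.card {w : L // IsTypeOf w μ ∧ w ≤ u} = Nat.card {w : L // IsTypeOf w μ ∧ w ≤ v}

/-- A finite semi-primary lattice is up-enumerable. -/
def UpEnum (L : Type*) [Lattice L] [BoundedOrder L] : Prop :=
  ∀ (u v : L) (φ μ : Multiset ℕ), IsTypeOf u φ → IsTypeOf v φ →
    Nat.card {w : L // IsTypeOf w μ ∧ u ≤ w} = Nat.card {w : L // IsTypeOf w μ ∧ v ≤ w}

/-- A lattice is enumerable if it is both down- and up-enumerable. -/
def Enumerable (L : Type*) [Lattice L] [BoundedOrder L] : Prop := DownEnum L ∧ UpEnum L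

/-- `α(φ,μ)`: the number of elements of type `μ` below a (any) element of type `φ`. -/
noncomputable def alphaP (L : Type*) [Lattice L] [BoundedOrder L] (φ μ : Multiset ℕ) : ℕ :=
  sSup {n | ∃ u : L, IsTypeOf u φ ∧ n = Nat.card {w : L // IsTypeOf w μ ∧ w ≤ u}}

/-- `β(φ,μ)`: the number of elements of type `μ` above a (any) element of type `φ`. -/
noncomputable def betaP (L : Type*) [Lattice L] [BoundedOrder L] (φ μ : Multiset ℕ) : ℕ :=
  sSup {n | ∃ u : L, IsTypeOf u φ ∧ n = Nat.card {w : L // IsTypeOf w μ ∧ u ≤ w}}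

/-- `α(μ, r₁, …, rₙ)`: the number of chains `x₁ ≤ ⋯ ≤ xₙ ≤ w` with `h(xᵢ) = rᵢ`,
below a (any) element `w` of type `μ`. -/
noncomputable def alphaChain (L : Type*) [Lattice L] [BoundedOrder L] (μ : Multiset ℕ)
    {n : ℕ} (r : Fin n → ℕ) : ℕ :=
  sSup {m | ∃ w : L, IsTypeOf w μ ∧
    m = Nat.card {x : Fin n → L // (∀ i, ht (x i) = r i) ∧ Monotone x ∧ ∀ i, x i ≤ w}}




section basicht
variable {L : Type*} [PartialOrder L] [Fintype L]

lemma height_lt_top (x : L) : Order.height x < ⊤ := by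
  refine lt_of_le_of_lt (Order.height_le fun p _ => ?_) (ENat.coe_lt_top (Fintype.card L))
  exact_mod_cast p.length_lt_card.le

lemma ht_coe (x : L) : (ht x : ℕ∞) = Order.height x := ENat.coe_toNat (height_lt_top x).ne

lemma ht_mono {x y : L} (h : x ≤ y) : ht x ≤ ht y :=
  ENat.toNat_le_toNat (Order.height_mono h) (height_lt_top y).ne

lemma ht_lt {x y : L} (h : x < y) : ht x < ht y := by
  have := Order.height_strictMono h (height_lt_top x)
  rw [← ht_coe x, ← ht_coe y] at this
  exact_mod_cast this

lemma eq_of_le_of_ht_le {x y : L} (h : x ≤ y) (h2 : ht y ≤ ht x) : x = y := by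
  rcases eq_or_lt_of_le h with rfl | hlt
  · rfl
  · exact absurd (ht_lt hlt) (not_lt.2 h2)


/-- there is an element of any given height below x -/
lemma exists_ht_le {x : L} {c : ℕ} (hc : c ≤ ht x) : ∃ w : L, w ≤ x ∧ ht w = c := by
  obtain ⟨p, hlast, hlen⟩ := Order.exists_series_of_height_eq_coe x (ht_coe x).symm
  have hidx := Order.height_eq_index_of_length_eq_height_last
    (p := p) (by rw [hlast, hlen, ht_coe])
  refine ⟨p ⟨c, by omega⟩, ?_, ?_⟩
  · have := p.monotone (Fin.le_last ⟨c, by omega⟩)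
    rwa [show p (Fin.last _) = x from hlast] at this
  · have := hidx ⟨c, by omega⟩
    have : (ht (p ⟨c, by omega⟩) : ℕ∞) = (c : ℕ∞) := by rw [ht_coe, this]
    exact_mod_cast this
end basicht

lemma ht_bot {L : Type*} [Preorder L] [OrderBot L] : ht (⊥ : L) = 0 := by
  simp [ht]

section cov
variable {L : Type*} [Lattice L] [IsModularLattice L] [Fintype L]

lemma covBy_ht_aux : ∀ n : ℕ, ∀ x y : L, x ⋖ y → ht y = n → ht x + 1 = n := by
  intro n
  induction n using Nat.strong_induction_on with
  | _ n IH =>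
  intro x y hxy hy
  have hxlty : ht x < ht y := ht_lt hxy.1
  have hn1 : 1 ≤ n := by omega
  -- z with z ⋖ y and ht z = n - 1
  obtain ⟨z₀, hz₀le, hz₀⟩ : ∃ z₀ : L, z₀ ≤ y ∧ ht z₀ = n - 1 := exists_ht_le (by omega)
  have hz₀lt : z₀ < y := lt_of_le_of_ne hz₀le (by rintro rfl; omega)
  obtain ⟨z, hzS, hzmax⟩ := Set.Finite.exists_maximalFor id {w : L | z₀ ≤ w ∧ w < y}
    (Set.toFinite _) ⟨z₀, le_rfl, hz₀lt⟩
  obtain ⟨hz₀z, hzy⟩ := hzS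
  have hcov : z ⋖ y := by
    refine ⟨hzy, fun w hzw hwy => ?_⟩
    have : z = w := le_antisymm hzw.le (hzmax ⟨hz₀z.trans hzw.le, hwy⟩ hzw.le)
    exact absurd this hzw.ne
  have hzht : ht z = n - 1 := by
    have h1 := ht_mono hz₀z
    have h2 := ht_lt hzy
    omega
  by_cases hxz : z ≤ x
  · have : x = z := by
      rcases eq_or_lt_of_le hxz with h | h
      · exact h.symm
      · exact (hcov.2 h hxy.1).elim
    rw [this, hzht]; omega
  · have hxz' : x ≠ z := fun h => hxz (h.ge)
    have hsup : x ⊔ z = y := by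
      rcases eq_or_lt_of_le (sup_le hxy.1.le hzy.le) with h | h
      · exact h
      · exact absurd h (hxy.2 (lt_of_le_of_ne le_sup_left (fun h' => hxz (h' ▸ le_sup_right))))
    have h1 : x ⊓ z ⋖ z := inf_covBy_of_covBy_sup_left (by rw [hsup]; exact hxy)
    have h2 : x ⊓ z ⋖ x := inf_covBy_of_covBy_sup_right (by rw [hsup]; exact hcov)
    have hIH : ht (x ⊓ z) + 1 = n - 1 := IH (n-1) (by omega) _ _ h1 hzht
    have h3 : ht (x ⊓ z) < ht x := ht_lt h2.1
    omega
end cov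

lemma covBy_ht {L : Type*} [Lattice L] [IsModularLattice L] [Fintype L] {x y : L}
    (h : x ⋖ y) : ht x + 1 = ht y :=
  covBy_ht_aux (ht y) x y h rfl

section rank
variable {L : Type*} [Lattice L] [IsModularLattice L] [Fintype L]

lemma ht_rank (a b : L) : ht (a ⊔ b) + ht (a ⊓ b) = ht a + ht b := by
  suffices h : ∀ k : ℕ, ∀ a b : L, ht b - ht (a ⊓ b) = k →
      ht (a ⊔ b) + ht (a ⊓ b) = ht a + ht b from h _ a b rfl
  intro k
  induction k using Nat.strong_induction_on with
  | _ k IH =>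
  intro a b hk
  have hib : ht (a ⊓ b) ≤ ht b := ht_mono inf_le_right
  by_cases hbb : a ⊓ b = b
  · have hba : b ≤ a := by rw [← hbb]; exact inf_le_left
    rw [hbb, sup_eq_left.mpr hba]
  · have hlt : a ⊓ b < b := lt_of_le_of_ne inf_le_right hbb
    obtain ⟨c, hcS, hcmin⟩ := Set.Finite.exists_minimalFor id {w : L | a ⊓ b < w ∧ w ≤ b}
      (Set.toFinite _) ⟨b, hlt, le_rfl⟩
    obtain ⟨hc1, hc2⟩ := hcS
    have hcov : a ⊓ b ⋖ c := by
      refine ⟨hc1, fun w h1 h2 => ?_⟩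
      exact absurd (le_antisymm (hcmin ⟨h1, h2.le.trans hc2⟩ h2.le) h2.le) h2.ne'
    have hac : a ⊓ c = a ⊓ b := le_antisymm
      (le_inf inf_le_left (le_trans inf_le_right hc2) |>.trans_eq rfl)
      (le_inf inf_le_left hc1.le)
    have hcovsup : a ⋖ a ⊔ c := covBy_sup_of_inf_covBy_right (hac ▸ hcov)
    have h1 : ht a + 1 = ht (a ⊔ c) := covBy_ht hcovsup
    have h2 : ht (a ⊓ b) + 1 = ht c := covBy_ht hcov
    have hsupinf : (a ⊔ c) ⊓ b = c := by
      rw [sup_comm, sup_inf_assoc_of_le a hc2]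
      exact sup_eq_left.mpr hc1.le
    have hsupsup : (a ⊔ c) ⊔ b = a ⊔ b := by
      rw [sup_assoc, sup_eq_right.mpr hc2]
    have hk' : ht b - ht ((a ⊔ c) ⊓ b) < k := by
      rw [hsupinf]
      have : ht c ≤ ht b := ht_mono hc2
      omega
    have := IH _ hk' (a ⊔ c) b rfl
    rw [hsupinf, hsupsup] at this
    omega
end rank

section chains
variable {L : Type*} [Lattice L] [IsModularLattice L]

lemma chain_Icc_sup {p c : L} (h : IsChain (· ≤ ·) (Set.Icc (p ⊓ c) c)) :
    IsChain (· ≤ ·) (Set.Icc p (p ⊔ c)) := by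
  have mem : ∀ w ∈ Set.Icc p (p ⊔ c), c ⊓ w ∈ Set.Icc (p ⊓ c) c :=
    fun w hw => ⟨le_inf inf_le_right (le_trans inf_le_left hw.1), inf_le_left⟩
  have hrec : ∀ w ∈ Set.Icc p (p ⊔ c), w = p ⊔ c ⊓ w := by
    intro w hw
    have h1 := sup_inf_assoc_of_le (x := p) c hw.1
    rw [inf_eq_right.mpr hw.2] at h1
    exact h1
  intro w₁ h₁ w₂ h₂ _
  rcases h.total (mem w₁ h₁) (mem w₂ h₂) with hle | hle
  · exact Or.inl (by rw [hrec w₁ h₁, hrec w₂ h₂]; exact sup_le_sup_left hle p)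
  · exact Or.inr (by rw [hrec w₁ h₁, hrec w₂ h₂]; exact sup_le_sup_left hle p)

lemma chain_Icc_inf {d u : L} (h : IsChain (· ≤ ·) (Set.Icc d (d ⊔ u))) :
    IsChain (· ≤ ·) (Set.Icc (d ⊓ u) u) := by
  have mem : ∀ w ∈ Set.Icc (d ⊓ u) u, w ⊔ d ∈ Set.Icc d (d ⊔ u) :=
    fun w hw => ⟨le_sup_right, sup_le (le_trans hw.2 le_sup_right) le_sup_left⟩
  have hrec : ∀ w ∈ Set.Icc (d ⊓ u) u, w = (w ⊔ d) ⊓ u := by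
    intro w hw
    rw [sup_inf_assoc_of_le d hw.2]
    exact (sup_eq_left.mpr hw.1).symm
  intro w₁ h₁ w₂ h₂ _
  rcases h.total (mem w₁ h₁) (mem w₂ h₂) with hle | hle
  · exact Or.inl (by rw [hrec w₁ h₁, hrec w₂ h₂]; exact inf_le_inf_right u hle)
  · exact Or.inr (by rw [hrec w₁ h₁, hrec w₂ h₂]; exact inf_le_inf_right u hle)
end chains

section sp
variable {L : Type*} [Lattice L] [IsModularLattice L] [BoundedOrder L] [Fintype L]

/-- a semiprimary interval with a unique atom is a chain -/
lemma chain_of_unique_atom (hsp : IsSemiPrimary L) {p u a : L} (hpu : p ≤ u)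
    (hpa : p < a) (hau : a ≤ u) (huniq : ∀ x, p < x → x ≤ u → a ≤ x) :
    IsChain (· ≤ ·) (Set.Icc p u) := by
  obtain ⟨s, hdual, hinf⟩ := (hsp p).2
  have hex : ∃ d ∈ s, d ⊓ u ≤ p := by
    by_contra hcon
    push_neg at hcon
    have : a ≤ p := by
      rw [hinf]
      refine Finset.le_inf fun d hd => le_trans ?_ (inf_le_left : d ⊓ u ≤ d)
      refine huniq (d ⊓ u) ?_ inf_le_right
      have hpd : p ≤ d ⊓ u := le_inf (hinf ▸ Finset.inf_le hd) hpu
      exact lt_of_le_of_ne hpd (fun h => hcon d hd h.ge)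
    exact absurd this hpa.not_ge
  obtain ⟨d, hd, hdu⟩ := hex
  have hpd : p ≤ d := hinf ▸ Finset.inf_le hd
  have heq : d ⊓ u = p := le_antisymm hdu (le_inf hpd hpu)
  have := chain_Icc_inf (d := d) (u := u) ((hdual d hd).mono (Set.Icc_subset_Icc_right le_top))
  rwa [heq] at this
end sp

section kl
variable {L : Type*} [Lattice L] [IsModularLattice L] [BoundedOrder L] [Fintype L]

lemma sup_cycles_in_chain (hchain : IsChain (· ≤ ·) (Set.Icc (y : L) c'))
    (hyc : y ≤ c') :
    ∀ t : Finset L, (∀ w ∈ t, IsCycle w) → y ⊔ t.sup id ≤ c' →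
      ∃ c₀, IsCycle c₀ ∧ y ⊔ t.sup id = y ⊔ c₀ ∧ c₀ ≤ c' := by
  classical
  intro t
  induction t using Finset.induction_on with
  | empty =>
    intro _ _
    exact ⟨⊥, by
      unfold IsCycle
      rw [Set.Icc_self]
      exact Set.subsingleton_singleton.isChain, by simp, bot_le⟩
  | insert a t hnotmem ih =>
    intro hcyc hle
    have hsup : (insert a t).sup id = a ⊔ t.sup id := Finset.sup_insert
    have hle' : y ⊔ t.sup id ≤ c' := le_trans (sup_le_sup_left (le_trans (Finset.sup_mono (Finset.subset_insert a t)) (le_of_eq rfl)) y) hle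
    obtain ⟨c₀, hc₀, heq, hc₀le⟩ := ih (fun w hw => hcyc w (Finset.mem_insert_of_mem hw)) hle'
    have hac' : a ≤ c' := le_trans (le_trans (Finset.le_sup (f := id) (Finset.mem_insert_self a t)) le_sup_right) hle
    have hyc' : y ≤ c' := le_trans le_sup_left hle
    have hmem1 : y ⊔ a ∈ Set.Icc y c' := ⟨le_sup_left, sup_le hyc' hac'⟩
    have hmem2 : y ⊔ c₀ ∈ Set.Icc y c' := ⟨le_sup_left, sup_le hyc' hc₀le⟩
    have hdecomp : y ⊔ (insert a t).sup id = (y ⊔ a) ⊔ (y ⊔ t.sup id) := by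
      rw [hsup, sup_sup_distrib_left]
    rcases eq_or_ne (y ⊔ a) (y ⊔ c₀) with hxy | hxy
    · exact ⟨c₀, hc₀, by rw [hdecomp, heq, hxy, sup_idem], hc₀le⟩
    rcases hchain.total hmem1 hmem2 with hcase | hcase
    · refine ⟨c₀, hc₀, ?_, hc₀le⟩
      rw [hdecomp, heq]
      rw [sup_eq_right.mpr hcase]
    · refine ⟨a, hcyc a (Finset.mem_insert_self a t), ?_, hac'⟩
      rw [hdecomp, heq]
      rw [sup_eq_left.mpr hcase]

lemma compl_of_max_cycle (hsp : IsSemiPrimary L) :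
    ∀ n : ℕ, ∀ p u z : L, ht u - ht p ≤ n → p ≤ u → p ≤ z → z ≤ u →
      IsChain (· ≤ ·) (Set.Icc p z) →
      (∀ c, p ≤ c → c ≤ u → IsChain (· ≤ ·) (Set.Icc p c) → ht c ≤ ht z) →
      ∃ y, p ≤ y ∧ y ≤ u ∧ z ⊓ y = p ∧ z ⊔ y = u := by
  intro n
  induction n with
  | zero =>
    intro p u z hn hpu hpz hzu _ _
    have hpueq : p = u := eq_of_le_of_ht_le hpu (by omega)
    have hzeq : z = u := le_antisymm hzu (hpueq ▸ hpz)
    exact ⟨p, le_rfl, hpu, inf_eq_right.mpr hpz, by rw [sup_eq_left.mpr hpz, hzeq]⟩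
  | succ n IH =>
    intro p u z hn hpu hpz hzu hchain hmax
    by_cases hy : ∃ y, p < y ∧ y ≤ u ∧ z ⊓ y = p
    · obtain ⟨y, hpy, hyu, hzy⟩ := hy
      -- pass to the interval [y, u]
      have hyzy : y ⊓ z = p := by rw [inf_comm]; exact hzy
      have hchain' : IsChain (· ≤ ·) (Set.Icc y (y ⊔ z)) := by
        apply chain_Icc_sup
        rw [hyzy]; exact hchain
      have hsupcomm : y ⊔ z = z ⊔ y := sup_comm y z
      have hmax' : ∀ c', y ≤ c' → c' ≤ u → IsChain (· ≤ ·) (Set.Icc y c') →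
          ht c' ≤ ht (z ⊔ y) := by
        intro c' hyc' hc'u hchainc
        obtain ⟨t, hcyc, hsupt⟩ := (hsp c').1
        have : y ⊔ t.sup id ≤ c' := by rw [← hsupt]; exact sup_le hyc' le_rfl
        obtain ⟨c₀, hc₀, heq, hc₀le⟩ := sup_cycles_in_chain hchainc hyc' t hcyc this
        have hc'eq : c' = y ⊔ c₀ := by rw [← heq, ← hsupt]; exact (sup_eq_right.mpr hyc').symm
        have e1 := ht_rank y c₀
        have e2 := ht_rank p c₀
        have e3 : ht (z ⊔ y) + ht p = ht z + ht y := by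
          have := ht_rank z y; rwa [hzy] at this
        have i4 : ht (p ⊔ c₀) ≤ ht z := by
          refine hmax (p ⊔ c₀) le_sup_left (sup_le hpu (le_trans hc₀le hc'u)) ?_
          apply chain_Icc_sup
          exact hc₀.mono (Set.Icc_subset_Icc_left bot_le)
        have i5 : ht (p ⊓ c₀) ≤ ht (y ⊓ c₀) := ht_mono (inf_le_inf_right c₀ hpy.le)
        rw [hc'eq]
        omega
      have hn' : ht u - ht y ≤ n := by
        have := ht_lt hpy
        omega
      obtain ⟨y'', h1, h2, h3, h4⟩ := IH y u (z ⊔ y) hn' hyu le_sup_right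
        (sup_le hzu hyu) (hsupcomm ▸ hchain') hmax'
      refine ⟨y'', hpy.le.trans h1, h2, ?_, ?_⟩
      · refine le_antisymm ?_ (le_inf hpz (hpy.le.trans h1))
        have : z ⊓ y'' ≤ y := by
          rw [← h3]; exact inf_le_inf_right y'' le_sup_left
        have : z ⊓ y'' ≤ z ⊓ y := le_inf inf_le_left this
        rw [hzy] at this; exact this
      · rw [← sup_eq_right.mpr h1, ← sup_assoc]
        exact h4
    · push_neg at hy
      rcases eq_or_lt_of_le hpu with hpueq | hpult
      · exact ⟨p, le_rfl, hpu, inf_eq_right.mpr hpz,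
          by rw [sup_eq_left.mpr hpz]; exact le_antisymm hzu (hpueq ▸ hpz)⟩
      -- p < u; there is a minimal element q above p, and Icc p q is a chain
      obtain ⟨q, hqS, hqmin⟩ := Set.Finite.exists_minimalFor id {x : L | p < x ∧ x ≤ u}
        (Set.toFinite _) ⟨u, hpult, le_rfl⟩
      have hchq : IsChain (· ≤ ·) (Set.Icc p q) := by
        have hmem : ∀ x ∈ Set.Icc p q, x = p ∨ x = q := by
          intro x hx
          rcases eq_or_lt_of_le hx.1 with heq | hlt
          · exact Or.inl heq.symm
          · exact Or.inr (le_antisymm (hqmin ⟨hlt, hx.2.trans hqS.2⟩ hx.2) hx.2).symm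
        intro x hx y hy _
        rcases hmem x hx with rfl | rfl <;> rcases hmem y hy with rfl | rfl
        · exact Or.inl le_rfl
        · exact Or.inl hqS.1.le
        · exact Or.inr hqS.1.le
        · exact Or.inl le_rfl
      have hqz : ht q ≤ ht z := hmax q hqS.1.le hqS.2 hchq
      have hzp : p < z := by
        rcases eq_or_lt_of_le hpz with heq | h
        · exact absurd hqz (by rw [← heq]; exact (ht_lt hqS.1).not_ge)
        · exact h
      -- a := the atom of the cycle z
      obtain ⟨a, haS, hamin⟩ := Set.Finite.exists_minimalFor id {x : L | p < x ∧ x ≤ z}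
        (Set.toFinite _) ⟨z, hzp, le_rfl⟩
      have huniq : ∀ x, p < x → x ≤ u → a ≤ x := by
        intro x hpx hxu
        have hpzx : p ≤ z ⊓ x := le_inf hpz hpx.le
        have hne : z ⊓ x ≠ p := fun h => hy x hpx hxu h
        have hein : z ⊓ x ∈ Set.Icc p z := ⟨hpzx, inf_le_left⟩
        have hain : a ∈ Set.Icc p z := ⟨haS.1.le, haS.2⟩
        have : a ≤ z ⊓ x := by
          rcases eq_or_ne a (z ⊓ x) with h | h
          · exact h.le
          · rcases hchain.total hain hein with hle | hle
            · exact hle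
            · exact (hamin ⟨lt_of_le_of_ne hpzx (Ne.symm hne), inf_le_left⟩ hle)
        exact this.trans inf_le_right
      have hchu : IsChain (· ≤ ·) (Set.Icc p u) :=
        chain_of_unique_atom hsp hpu haS.1 (haS.2.trans hzu) huniq
      have : ht u ≤ ht z := hmax u hpu le_rfl hchu
      have hzequ : z = u := eq_of_le_of_ht_le hzu this
      exact ⟨p, le_rfl, hpu, inf_eq_right.mpr hpz, by rw [sup_eq_left.mpr hpz, hzequ]⟩

end kl

section typ
variable {L : Type*} [Lattice L] [IsModularLattice L] [BoundedOrder L] [Fintype L]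

lemma ht_sup_indep {n : ℕ} {z : Fin n → L} (hind : IndepFun z) :
    ∀ S : Finset (Fin n), ht (S.sup z) = ∑ i ∈ S, ht (z i) := by
  classical
  intro S
  induction S using Finset.induction_on with
  | empty => simp [ht_bot]
  | insert j S hnotmem ih =>
    have hdisj : z j ⊓ S.sup z = ⊥ := by
      refine le_antisymm ?_ bot_le
      have hsub : S ⊆ Finset.univ.erase j :=
        fun i hi => Finset.mem_erase.mpr ⟨fun h => hnotmem (h ▸ hi), Finset.mem_univ i⟩
      have h1 : z j ⊓ S.sup z ≤ (Finset.univ.erase j).sup z ⊓ z j :=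
        le_inf (le_trans inf_le_right (Finset.sup_mono hsub)) inf_le_left
      exact le_trans h1 (le_of_eq (hind j))
    have := ht_rank (z j) (S.sup z)
    rw [hdisj, ht_bot] at this
    rw [Finset.sup_insert, Finset.sum_insert hnotmem]
    rw [ih] at this
    omega

lemma ht_type {u : L} {μ : Multiset ℕ} (h : IsTypeOf u μ) : ht u = μ.sum := by
  obtain ⟨n, z, _, _, hind, hsup, hmul⟩ := h
  rw [hsup, ht_sup_indep hind Finset.univ, ← hmul]
  rw [Multiset.sum_coe, List.sum_ofFn]

lemma exists_type (hsp : IsSemiPrimary L) (u : L) : ∃ μ, IsTypeOf u μ := by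
  suffices h : ∀ n : ℕ, ∀ u : L, ht u ≤ n → ∃ μ, IsTypeOf u μ from h (ht u) u le_rfl
  intro n
  induction n using Nat.strong_induction_on with
  | _ n IH =>
  intro u hu
  rcases eq_or_ne u ⊥ with rfl | hne
  · refine ⟨0, 0, Fin.elim0, (fun i => i.elim0), (fun i => i.elim0), (fun i => i.elim0), ?_, by simp⟩
    simp
  · -- there is a nonzero cycle below u
    obtain ⟨s, hcyc, hsups⟩ := (hsp u).1
    have hexc : ∃ c : L, IsCycle c ∧ c ≤ u ∧ c ≠ ⊥ := by
      by_contra hcon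
      push_neg at hcon
      apply hne
      rw [hsups]
      refine le_antisymm (Finset.sup_le fun c hc => ?_) bot_le
      rcases eq_or_ne c ⊥ with rfl | hcne
      · exact le_rfl
      · exact absurd hcne (not_not.mpr (hcon c (hcyc c hc) (hsups ▸ Finset.le_sup (f := id) hc)))
    obtain ⟨c, hccyc, hcu, hcne⟩ := hexc
    -- choose a cycle of maximal height below u
    obtain ⟨z, hzS, hzmax⟩ := Set.Finite.exists_maximalFor (fun c => ht c)
      {c : L | IsCycle c ∧ c ≤ u} (Set.toFinite _) ⟨c, hccyc, hcu⟩
    have hmax : ∀ c', IsCycle c' → c' ≤ u → ht c' ≤ ht z := by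
      intro c' h1 h2
      by_contra hgt
      push_neg at hgt
      exact absurd (hzmax ⟨h1, h2⟩ hgt.le) hgt.not_ge
    have hzne : z ≠ ⊥ := by
      intro h
      have h1 : 1 ≤ ht c := by
        have := ht_lt (show (⊥ : L) < c from bot_lt_iff_ne_bot.mpr hcne)
        rw [ht_bot] at this; omega
      have := hmax c hccyc hcu
      rw [h, ht_bot] at this; omega
    -- complement
    obtain ⟨y, _, hyu, hzy, hzyu⟩ := compl_of_max_cycle hsp (ht u) ⊥ u z (by omega)
      bot_le bot_le hzS.2 hzS.1 (fun c' _ h2 h3 => hmax c' h3 h2)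
    have hyht : ht y < ht u := by
      have := ht_rank z y
      rw [hzy, hzyu, ht_bot] at this
      have h1 : 1 ≤ ht z := by
        have := ht_lt (show (⊥ : L) < z from bot_lt_iff_ne_bot.mpr hzne)
        rw [ht_bot] at this; omega
      have := ht_mono hyu
      omega
    obtain ⟨μy, ny, zy, hzy1, hzy2, hzy3, hzy4, hzy5⟩ := IH (ht y) (by omega) y le_rfl
    -- assemble
    refine ⟨ht z ::ₘ μy, ny + 1, Fin.cons z zy, ?_, ?_, ?_, ?_, ?_⟩
    · intro i
      refine Fin.cases ?_ ?_ i
      · exact hzS.1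
      · exact hzy1
    · intro i
      refine Fin.cases ?_ ?_ i
      · exact hzne
      · exact hzy2
    · intro i
      refine Fin.cases ?_ ?_ i
      · -- i = 0
        refine le_antisymm ?_ bot_le
        have hle : (Finset.univ.erase (0 : Fin (ny+1))).sup (Fin.cons z zy) ≤ y := by
          refine Finset.sup_le fun j hj => ?_
          obtain ⟨k, rfl⟩ := Fin.exists_succ_eq.mpr (Finset.mem_erase.mp hj).1
          rw [Fin.cons_succ]
          exact hzy4 ▸ Finset.le_sup (Finset.mem_univ k)
        have hyz : y ⊓ z = ⊥ := by rw [inf_comm]; exact hzy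
        simp only [Fin.cons_zero]
        exact le_trans (inf_le_inf_right z hle) (le_of_eq hyz)
      · intro k
        refine le_antisymm ?_ bot_le
        set w := (Finset.univ.erase k).sup zy with hw
        have hle : (Finset.univ.erase k.succ).sup (Fin.cons z zy) ≤ z ⊔ w := by
          refine Finset.sup_le fun j hj => ?_
          rcases Fin.eq_zero_or_eq_succ j with rfl | ⟨m, rfl⟩
          · rw [Fin.cons_zero]; exact le_sup_left
          · rw [Fin.cons_succ]
            refine le_trans ?_ le_sup_right
            refine Finset.le_sup (Finset.mem_erase.mpr ⟨?_, Finset.mem_univ m⟩)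
            intro hmk
            exact (Finset.mem_erase.mp hj).1 (by rw [hmk])
        have hwy : w ≤ y := by
          rw [hzy4]
          exact Finset.sup_mono (Finset.subset_univ _)
        have hzw : (z ⊔ w) ⊓ zy k = ⊥ := by
          have hwzk : w ⊓ zy k = ⊥ := hzy3 k
          have hstep : (w ⊔ z) ⊓ (w ⊔ zy k) = w := by
            rw [sup_inf_assoc_of_le z (le_sup_left : w ≤ w ⊔ zy k)]
            have : z ⊓ (w ⊔ zy k) = ⊥ := by
              refine le_antisymm ?_ bot_le
              have h1 : w ⊔ zy k ≤ y := by
                refine sup_le hwy ?_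
                rw [hzy4]; exact Finset.le_sup (Finset.mem_univ k)
              calc z ⊓ (w ⊔ zy k) ≤ z ⊓ y := inf_le_inf_left z h1
                _ = ⊥ := hzy
            rw [this, sup_bot_eq]
          refine le_antisymm ?_ bot_le
          have hc1 : (z ⊔ w) ⊓ zy k ≤ ((w ⊔ z) ⊓ (w ⊔ zy k)) ⊓ zy k := by
            refine le_inf (le_inf ?_ ?_) inf_le_right
            · rw [sup_comm w z]; exact inf_le_left
            · exact le_trans inf_le_right le_sup_right
          rw [hstep] at hc1
          exact le_trans hc1 (le_of_eq (hzy3 k))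
        simp only [Fin.cons_succ]
        exact le_trans (inf_le_inf_right _ hle) (le_of_eq hzw)
    · rw [← hzyu, hzy4]
      refine le_antisymm (sup_le ?_ ?_) (Finset.sup_le fun j _ => ?_)
      · have := Finset.le_sup (f := Fin.cons z zy) (Finset.mem_univ (0 : Fin (ny+1)))
        simpa using this
      · refine Finset.sup_le fun m _ => ?_
        have := Finset.le_sup (f := Fin.cons z zy) (Finset.mem_univ m.succ)
        simpa using this
      · rcases Fin.eq_zero_or_eq_succ j with rfl | ⟨m, rfl⟩
        · simp only [Fin.cons_zero]; exact le_sup_left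
        · simp only [Fin.cons_succ]
          exact le_trans (Finset.le_sup (Finset.mem_univ m)) le_sup_right
    · rw [List.ofFn_succ]
      simp only [Fin.cons_zero, Fin.cons_succ]
      rw [← hzy5]
      rfl
end typ

section counting
variable {L : Type*} [Lattice L] [IsModularLattice L] [BoundedOrder L] [Fintype L]

open Finset

open Classical in
/-- least element of a set of partitions, under a fixed well-ordering -/
noncomputable def typeMin (S : Set (Multiset ℕ)) : Multiset ℕ :=
  if h : S.Nonempty then (@IsWellFounded.wf (Multiset ℕ) WellOrderingRel _).min S h else 0

lemma typeMin_mem {S : Set (Multiset ℕ)} (h : S.Nonempty) : typeMin S ∈ S := by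
  rw [typeMin, dif_pos h]
  exact WellFounded.min_mem _ _ _

/-- the canonical type of an element -/
noncomputable def Tcan (v : L) : Multiset ℕ := typeMin {μ | IsTypeOf v μ}

lemma natCard_eq_filter (p : L → Prop) [DecidablePred p] :
    Nat.card {w : L // p w} = (Finset.univ.filter p).card := by
  rw [Nat.card_eq_fintype_card]
  convert Fintype.card_subtype p

lemma card_pos_of_mem {p : L → Prop} [DecidablePred p] {x : L} (hx : p x) :
    0 < (Finset.univ.filter p).card :=
  Finset.card_pos.mpr ⟨x, Finset.mem_filter.mpr ⟨Finset.mem_univ x, hx⟩⟩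

/-- two types of the same element have the same extent -/
lemma type_ext (hde : DownEnum L) {v : L} {μ μ' : Multiset ℕ}
    (h : IsTypeOf v μ) (h' : IsTypeOf v μ') {x : L} (hx : IsTypeOf x μ) :
    IsTypeOf x μ' := by
  classical
  have hcard := hde x v μ μ' hx h
  rw [natCard_eq_filter, natCard_eq_filter] at hcard
  have hpos : 0 < (Finset.univ.filter (fun w : L => IsTypeOf w μ' ∧ w ≤ v)).card :=
    card_pos_of_mem ⟨h', le_rfl⟩
  rw [← hcard] at hpos
  obtain ⟨w, hw⟩ := Finset.card_pos.mp hpos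
  obtain ⟨-, hwμ', hwx⟩ := Finset.mem_filter.mp hw
  have h1 : ht w = μ'.sum := ht_type hwμ'
  have h2 : ht x = μ.sum := ht_type hx
  have h3 : ht v = μ.sum := ht_type h
  have h4 : ht v = μ'.sum := ht_type h'
  have hwex : w = x := eq_of_le_of_ht_le hwx (by omega)
  exact hwex ▸ hwμ'

lemma typeset_eq (hde : DownEnum L) {v v' : L} {μ : Multiset ℕ}
    (h : IsTypeOf v μ) (h' : IsTypeOf v' μ) :
    {μ' | IsTypeOf v μ'} = {μ' | IsTypeOf v' μ'} :=
  Set.ext fun _ => ⟨fun hh => type_ext hde h hh h', fun hh => type_ext hde h' hh h⟩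

lemma Tcan_type (hsp : IsSemiPrimary L) (v : L) : IsTypeOf v (Tcan v) :=
  typeMin_mem (exists_type hsp v)

lemma Tcan_eq (hde : DownEnum L) {v v' : L} {μ : Multiset ℕ}
    (h : IsTypeOf v μ) (h' : IsTypeOf v' μ) : Tcan v = Tcan v' := by
  have hs := typeset_eq hde h h'
  unfold Tcan
  rw [hs]

lemma Tcan_sum (hsp : IsSemiPrimary L) (v : L) : (Tcan v).sum = ht v :=
  (ht_type (Tcan_type hsp v)).symm

lemma Tcan_of_type (hsp : IsSemiPrimary L) (hde : DownEnum L) {x : L} {τ : Multiset ℕ}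
    (hcanon : ∃ v : L, Tcan v = τ) (hx : IsTypeOf x τ) : Tcan x = τ := by
  obtain ⟨v, hv⟩ := hcanon
  rw [← hv]
  exact Tcan_eq hde (hv ▸ hx) (Tcan_type hsp v)

lemma sum_eq_of_card_eq {α : Type*} [DecidableEq α] {s t : Finset α} (f : α → ℕ)
    (h : s.card = t.card) (hc : ∀ x ∈ s ∪ t, ∀ y ∈ s ∪ t, f x = f y) :
    ∑ x ∈ s, f x = ∑ x ∈ t, f x := by
  rcases s.eq_empty_or_nonempty with rfl | ⟨x₀, hx₀⟩
  · have : t = ∅ := Finset.card_eq_zero.mp (by rw [← h]; simp)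
    simp [this]
  · have hs : ∑ x ∈ s, f x = s.card * f x₀ := by
      rw [Finset.sum_congr rfl (fun x hx => hc x (Finset.mem_union_left _ hx) x₀
        (Finset.mem_union_left _ hx₀)), Finset.sum_const, smul_eq_mul]
    have ht' : ∑ x ∈ t, f x = t.card * f x₀ := by
      rw [Finset.sum_congr rfl (fun x hx => hc x (Finset.mem_union_right _ hx) x₀
        (Finset.mem_union_left _ hx₀)), Finset.sum_const, smul_eq_mul]
    rw [hs, ht', h]

open Classical in
noncomputable def GFun (F : L → ℕ) (w : L) : ℕ := ∑ v : L, if w ≤ v then F v else 0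

noncomputable def Dcnt (x : L) (σ : Multiset ℕ) : ℕ := Nat.card {w : L // IsTypeOf w σ ∧ w ≤ x}

noncomputable def QFun (F : L → ℕ) (u : L) (τ : Multiset ℕ) : ℕ :=
  ∑ v : L, if Tcan (u ⊓ v) = τ then F v else 0

open Classical in
lemma mul_natCard (a : ℕ) (p : L → Prop) :
    a * Nat.card {w : L // p w} = ∑ w : L, if p w then a else 0 := by
  symm
  rw [← Finset.sum_filter, Finset.sum_const, smul_eq_mul, mul_comm, natCard_eq_filter p]

lemma Dcnt_congr (hsp : IsSemiPrimary L) (hde : DownEnum L) {x x' : L}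
    (h : Tcan x = Tcan x') (τ : Multiset ℕ) : Dcnt x τ = Dcnt x' τ :=
  hde x x' (Tcan x) τ (Tcan_type hsp x) (h ▸ Tcan_type hsp x')

lemma Dcnt_diag (hsp : IsSemiPrimary L) (hde : DownEnum L) {x : L} {τ : Multiset ℕ}
    (hTx : Tcan x = τ) : Dcnt x τ = 1 := by
  classical
  rw [Dcnt, natCard_eq_filter, Finset.card_eq_one]
  refine ⟨x, ?_⟩
  ext w
  simp only [Finset.mem_filter, Finset.mem_univ, true_and, Finset.mem_singleton]
  constructor
  · rintro ⟨hwτ, hwx⟩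
    refine eq_of_le_of_ht_le hwx ?_
    have h1 : ht w = τ.sum := ht_type hwτ
    have h2 : (Tcan x).sum = ht x := Tcan_sum hsp x
    rw [hTx] at h2
    omega
  · rintro rfl
    exact ⟨hTx ▸ Tcan_type hsp _, le_rfl⟩

lemma Dcnt_zero (hsp : IsSemiPrimary L) (hde : DownEnum L) {x : L} {τ : Multiset ℕ}
    (hcanon : ∃ v₀ : L, Tcan v₀ = τ) (hle : ht x ≤ τ.sum) (hne : Tcan x ≠ τ) :
    Dcnt x τ = 0 := by
  classical
  rw [Dcnt, natCard_eq_filter, Finset.card_eq_zero, Finset.filter_eq_empty_iff]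
  rintro w _ ⟨hwτ, hwx⟩
  have hwe : w = x := eq_of_le_of_ht_le hwx (by rw [ht_type hwτ]; exact hle)
  exact hne (Tcan_of_type hsp hde hcanon (hwe ▸ hwτ))

open Classical in
lemma fiber_sum_eq (hsp : IsSemiPrimary L) (hde : DownEnum L) (hue : UpEnum L)
    {F : L → ℕ} (hFt : ∀ (v v' : L) (μ'' : Multiset ℕ), IsTypeOf v μ'' → IsTypeOf v' μ'' → F v = F v')
    {w w' : L} {σ : Multiset ℕ} (hw : IsTypeOf w σ) (hw' : IsTypeOf w' σ)
    {μ : Multiset ℕ} (hμ : ∃ v₀ : L, Tcan v₀ = μ) :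
    ∑ v ∈ Finset.univ.filter (fun v : L => w ≤ v ∧ Tcan v = μ), F v
      = ∑ v ∈ Finset.univ.filter (fun v : L => w' ≤ v ∧ Tcan v = μ), F v := by
  classical
  have hset : ∀ w'' : L, Finset.univ.filter (fun v : L => w'' ≤ v ∧ Tcan v = μ)
      = Finset.univ.filter (fun v : L => IsTypeOf v μ ∧ w'' ≤ v) := by
    intro w''
    ext v
    simp only [Finset.mem_filter, Finset.mem_univ, true_and]
    constructor
    · rintro ⟨h1, h2⟩; exact ⟨h2 ▸ Tcan_type hsp v, h1⟩
    · rintro ⟨h1, h2⟩; exact ⟨h2, Tcan_of_type hsp hde hμ h1⟩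
  rw [hset, hset]
  refine sum_eq_of_card_eq _ ?_ ?_
  · have := hue w w' σ μ hw hw'
    rw [natCard_eq_filter, natCard_eq_filter] at this
    exact this
  · intro x hx y hy
    have hx' : IsTypeOf x μ := by
      rcases Finset.mem_union.mp hx with h | h <;> exact (Finset.mem_filter.mp h).2.1
    have hy' : IsTypeOf y μ := by
      rcases Finset.mem_union.mp hy with h | h <;> exact (Finset.mem_filter.mp h).2.1
    exact hFt x y μ hx' hy'

lemma G_eq (hsp : IsSemiPrimary L) (hde : DownEnum L) (hue : UpEnum L)
    {F : L → ℕ} (hFt : ∀ (v v' : L) (μ'' : Multiset ℕ), IsTypeOf v μ'' → IsTypeOf v' μ'' → F v = F v')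
    {w w' : L} {σ : Multiset ℕ} (hw : IsTypeOf w σ) (hw' : IsTypeOf w' σ) :
    GFun F w = GFun F w' := by
  classical
  have hG : ∀ w0 : L, GFun F w0
      = ∑ μ ∈ Finset.univ.image (fun v : L => Tcan v),
          ∑ v ∈ Finset.univ.filter (fun v : L => w0 ≤ v ∧ Tcan v = μ), F v := by
    intro w0
    rw [GFun, ← Finset.sum_filter]
    rw [← Finset.sum_fiberwise_of_maps_to
      (g := fun v : L => Tcan v) (t := Finset.univ.image (fun v : L => Tcan v))
      (fun v _ => Finset.mem_image_of_mem _ (Finset.mem_univ v)) F]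
    refine Finset.sum_congr rfl fun μ _ => ?_
    rw [Finset.filter_filter]
  rw [hG w, hG w']
  refine Finset.sum_congr rfl fun μ hμ => ?_
  obtain ⟨v₀, _, hv₀⟩ := Finset.mem_image.mp hμ
  exact fiber_sum_eq hsp hde hue hFt hw hw' ⟨v₀, hv₀⟩

lemma A_eq (hsp : IsSemiPrimary L) (hde : DownEnum L) (hue : UpEnum L)
    {F : L → ℕ} (hFt : ∀ (v v' : L) (μ'' : Multiset ℕ), IsTypeOf v μ'' → IsTypeOf v' μ'' → F v = F v')
    {u₁ u₂ : L} {φ : Multiset ℕ} (h₁ : IsTypeOf u₁ φ) (h₂ : IsTypeOf u₂ φ) (σ : Multiset ℕ) :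
    ∑ v : L, F v * Dcnt (u₁ ⊓ v) σ = ∑ v : L, F v * Dcnt (u₂ ⊓ v) σ := by
  classical
  have hswap : ∀ u : L, ∑ v : L, F v * Dcnt (u ⊓ v) σ
      = ∑ w ∈ Finset.univ.filter (fun w : L => IsTypeOf w σ ∧ w ≤ u), GFun F w := by
    intro u
    calc ∑ v : L, F v * Dcnt (u ⊓ v) σ
        = ∑ v : L, ∑ w : L, (if IsTypeOf w σ ∧ w ≤ u ⊓ v then F v else 0) := by
          refine Finset.sum_congr rfl fun v _ => ?_
          rw [Dcnt]
          refine (mul_natCard (F v) (fun w : L => IsTypeOf w σ ∧ w ≤ u ⊓ v)).trans ?_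
          exact Finset.sum_congr rfl fun w _ => by split_ifs <;> rfl
      _ = ∑ w : L, ∑ v : L, (if IsTypeOf w σ ∧ w ≤ u ⊓ v then F v else 0) := Finset.sum_comm
      _ = ∑ w : L, (if IsTypeOf w σ ∧ w ≤ u then GFun F w else 0) := by
          refine Finset.sum_congr rfl fun w _ => ?_
          by_cases hP : IsTypeOf w σ ∧ w ≤ u
          · rw [if_pos hP, GFun]
            refine Finset.sum_congr rfl fun v _ => ?_
            simp only [le_inf_iff, eq_true hP.1, eq_true hP.2, true_and]
          · rw [if_neg hP]
            refine Finset.sum_eq_zero fun v _ => ?_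
            rw [if_neg]
            rintro ⟨hh1, hh2⟩
            exact hP ⟨hh1, le_trans hh2 inf_le_left⟩
      _ = ∑ w ∈ Finset.univ.filter (fun w : L => IsTypeOf w σ ∧ w ≤ u), GFun F w :=
          (Finset.sum_filter _ _).symm
  rw [hswap u₁, hswap u₂]
  refine sum_eq_of_card_eq _ ?_ ?_
  · have := hde u₁ u₂ φ σ h₁ h₂
    rw [natCard_eq_filter, natCard_eq_filter] at this
    exact this
  · intro x hx y hy
    have hx' : IsTypeOf x σ := by
      rcases Finset.mem_union.mp hx with h | h <;> exact (Finset.mem_filter.mp h).2.1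
    have hy' : IsTypeOf y σ := by
      rcases Finset.mem_union.mp hy with h | h <;> exact (Finset.mem_filter.mp h).2.1
    exact G_eq hsp hde hue hFt hx' hy'

lemma Q_eq (hsp : IsSemiPrimary L) (hde : DownEnum L) (hue : UpEnum L)
    {F : L → ℕ} (hFt : ∀ (v v' : L) (μ'' : Multiset ℕ), IsTypeOf v μ'' → IsTypeOf v' μ'' → F v = F v')
    {u₁ u₂ : L} {φ : Multiset ℕ} (h₁ : IsTypeOf u₁ φ) (h₂ : IsTypeOf u₂ φ) (τ : Multiset ℕ) :
    QFun F u₁ τ = QFun F u₂ τ := by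
  classical
  set N := ht (⊤ : L) with hN
  have hQfilter : ∀ (u : L) (τ' : Multiset ℕ), QFun F u τ'
      = ∑ v ∈ Finset.univ.filter (fun v : L => Tcan (u ⊓ v) = τ'), F v :=
    fun u τ' => (Finset.sum_filter _ _).symm
  have hQzero : ∀ (u : L) (τ' : Multiset ℕ), (¬ ∃ v₀ : L, Tcan v₀ = τ') → QFun F u τ' = 0 := by
    intro u τ' hcon
    exact Finset.sum_eq_zero fun v _ => if_neg fun h => hcon ⟨u ⊓ v, h⟩
  have key : ∀ n : ℕ, ∀ τ : Multiset ℕ, (∃ v₀ : L, Tcan v₀ = τ) → N < τ.sum + n →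
      QFun F u₁ τ = QFun F u₂ τ := by
    intro n
    induction n with
    | zero =>
      rintro τ ⟨v₀, hv₀⟩ hlt
      exfalso
      have : τ.sum ≤ N := by
        rw [← hv₀, Tcan_sum hsp]
        exact ht_mono le_top
      omega
    | succ n ihn =>
      intro τ hcanon hlt
      have hτTS : τ ∈ Finset.univ.image (fun v : L => Tcan v) := by
        obtain ⟨v₀, hv₀⟩ := hcanon
        exact Finset.mem_image.mpr ⟨v₀, Finset.mem_univ v₀, hv₀⟩
      have hdec : ∀ u : L, ∑ v : L, F v * Dcnt (u ⊓ v) τ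
          = QFun F u τ + ∑ τ' ∈ (Finset.univ.image (fun v : L => Tcan v)).filter
              (fun τ' => τ.sum < τ'.sum),
              ∑ v ∈ Finset.univ.filter (fun v : L => Tcan (u ⊓ v) = τ'), F v * Dcnt (u ⊓ v) τ := by
        intro u
        rw [← Finset.sum_fiberwise_of_maps_to
          (g := fun v : L => Tcan (u ⊓ v)) (t := Finset.univ.image (fun v : L => Tcan v))
          (fun v _ => Finset.mem_image.mpr ⟨u ⊓ v, Finset.mem_univ _, rfl⟩)
          (fun v => F v * Dcnt (u ⊓ v) τ)]
        rw [← Finset.sum_filter_add_sum_filter_not (Finset.univ.image (fun v : L => Tcan v))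
          (fun τ' => τ.sum < τ'.sum)]
        have h2 : ∑ τ' ∈ (Finset.univ.image (fun v : L => Tcan v)).filter
            (fun τ' => ¬ τ.sum < τ'.sum),
            (∑ v ∈ Finset.univ.filter (fun v : L => Tcan (u ⊓ v) = τ'), F v * Dcnt (u ⊓ v) τ)
            = QFun F u τ := by
          rw [Finset.sum_eq_single_of_mem τ
            (Finset.mem_filter.mpr ⟨hτTS, by omega⟩)]
          · rw [hQfilter u τ]
            refine Finset.sum_congr rfl fun v hv => ?_
            rw [Dcnt_diag hsp hde (Finset.mem_filter.mp hv).2, mul_one]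
          · intro τ' hτ' hne
            refine Finset.sum_eq_zero fun v hv => ?_
            have hT : Tcan (u ⊓ v) = τ' := (Finset.mem_filter.mp hv).2
            have hns : ¬ τ.sum < τ'.sum := (Finset.mem_filter.mp hτ').2
            have hhle : ht (u ⊓ v) ≤ τ.sum := by
              have := Tcan_sum hsp (u ⊓ v)
              rw [hT] at this
              omega
            rw [Dcnt_zero hsp hde hcanon hhle (by rw [hT]; exact hne), mul_zero]
        omega
      have hcorr : ∀ τ' ∈ (Finset.univ.image (fun v : L => Tcan v)).filter
          (fun τ' => τ.sum < τ'.sum),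
          (∑ v ∈ Finset.univ.filter (fun v : L => Tcan (u₁ ⊓ v) = τ'), F v * Dcnt (u₁ ⊓ v) τ)
          = (∑ v ∈ Finset.univ.filter (fun v : L => Tcan (u₂ ⊓ v) = τ'), F v * Dcnt (u₂ ⊓ v) τ) := by
        intro τ' hτ'
        have hcan' : ∃ v₀ : L, Tcan v₀ = τ' := by
          obtain ⟨v₀, _, hv₀⟩ := Finset.mem_image.mp (Finset.mem_filter.mp hτ').1
          exact ⟨v₀, hv₀⟩
        have hsum' : τ.sum < τ'.sum := (Finset.mem_filter.mp hτ').2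
        have hQ' : QFun F u₁ τ' = QFun F u₂ τ' := ihn τ' hcan' (by omega)
        rcases (Finset.univ.filter (fun v : L => Tcan (u₁ ⊓ v) = τ')).eq_empty_or_nonempty
          with he | ⟨v₀, hv₀⟩
        · have hq1 : QFun F u₁ τ' = 0 := by rw [hQfilter u₁, he]; simp
          have hq2 : QFun F u₂ τ' = 0 := by rw [← hQ']; exact hq1
          rw [hQfilter u₂] at hq2
          rw [he]
          symm
          rw [Finset.sum_empty]
          refine Finset.sum_eq_zero fun v hv => ?_
          rw [Finset.sum_eq_zero_iff.mp hq2 v hv, zero_mul]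
        · have hcong : ∀ u : L, ∀ v ∈ Finset.univ.filter (fun v : L => Tcan (u ⊓ v) = τ'),
              Dcnt (u ⊓ v) τ = Dcnt (u₁ ⊓ v₀) τ := by
            intro u v hv
            refine Dcnt_congr hsp hde ?_ τ
            rw [(Finset.mem_filter.mp hv).2, (Finset.mem_filter.mp hv₀).2]
          calc ∑ v ∈ Finset.univ.filter (fun v : L => Tcan (u₁ ⊓ v) = τ'), F v * Dcnt (u₁ ⊓ v) τ
              = (∑ v ∈ Finset.univ.filter (fun v : L => Tcan (u₁ ⊓ v) = τ'), F v)
                  * Dcnt (u₁ ⊓ v₀) τ := by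
                rw [Finset.sum_mul]
                exact Finset.sum_congr rfl fun v hv => by rw [hcong u₁ v hv]
            _ = QFun F u₁ τ' * Dcnt (u₁ ⊓ v₀) τ := by rw [hQfilter u₁]
            _ = QFun F u₂ τ' * Dcnt (u₁ ⊓ v₀) τ := by rw [hQ']
            _ = (∑ v ∈ Finset.univ.filter (fun v : L => Tcan (u₂ ⊓ v) = τ'), F v)
                  * Dcnt (u₁ ⊓ v₀) τ := by rw [hQfilter u₂]
            _ = ∑ v ∈ Finset.univ.filter (fun v : L => Tcan (u₂ ⊓ v) = τ'), F v * Dcnt (u₂ ⊓ v) τ := by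
                rw [Finset.sum_mul]
                exact Finset.sum_congr rfl fun v hv => by rw [hcong u₂ v hv]
      have hA := A_eq hsp hde hue hFt h₁ h₂ τ
      have hd1 := hdec u₁
      have hd2 := hdec u₂
      have hcs := Finset.sum_congr rfl hcorr
      omega
  by_cases hcanon : ∃ v₀ : L, Tcan v₀ = τ
  · exact key (N + 1) τ hcanon (by omega)
  · rw [hQzero u₁ τ hcanon, hQzero u₂ τ hcanon]

open Classical in
lemma main_count (hsp : IsSemiPrimary L) (hde : DownEnum L) (hue : UpEnum L)
    (F : L → ℕ) (hFt : ∀ (v v' : L) (μ'' : Multiset ℕ), IsTypeOf v μ'' → IsTypeOf v' μ'' → F v = F v')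
    {u₁ u₂ : L} {φ : Multiset ℕ} (h₁ : IsTypeOf u₁ φ) (h₂ : IsTypeOf u₂ φ) (c : ℕ) :
    ∑ v : L, (if c ≤ ht (u₁ ⊓ v) then F v else 0)
      = ∑ v : L, (if c ≤ ht (u₂ ⊓ v) then F v else 0) := by
  classical
  have hmain : ∀ u : L, ∑ v : L, (if c ≤ ht (u ⊓ v) then F v else 0)
      = ∑ τ ∈ Finset.univ.image (fun v : L => Tcan v), (if c ≤ τ.sum then QFun F u τ else 0) := by
    intro u
    rw [← Finset.sum_fiberwise_of_maps_to
      (g := fun v : L => Tcan (u ⊓ v)) (t := Finset.univ.image (fun v : L => Tcan v))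
      (fun v _ => Finset.mem_image.mpr ⟨u ⊓ v, Finset.mem_univ _, rfl⟩)
      (fun v => if c ≤ ht (u ⊓ v) then F v else 0)]
    refine Finset.sum_congr rfl fun τ _ => ?_
    by_cases hcs : c ≤ τ.sum
    · rw [if_pos hcs]
      have hq : QFun F u τ = ∑ v ∈ Finset.univ.filter (fun v : L => Tcan (u ⊓ v) = τ), F v :=
        (Finset.sum_filter _ _).symm
      rw [hq]
      refine Finset.sum_congr rfl fun v hv => ?_
      have hT := (Finset.mem_filter.mp hv).2
      have hs := Tcan_sum hsp (u ⊓ v)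
      rw [hT] at hs
      rw [if_pos (by omega)]
    · rw [if_neg hcs]
      refine Finset.sum_eq_zero fun v hv => ?_
      have hT := (Finset.mem_filter.mp hv).2
      have hs := Tcan_sum hsp (u ⊓ v)
      rw [hT] at hs
      rw [if_neg (by omega)]
  rw [hmain u₁, hmain u₂]
  exact Finset.sum_congr rfl fun τ _ => by rw [Q_eq hsp hde hue hFt h₁ h₂ τ]
end counting


/-- In a finite enumerable lattice, spheres (and their layers by height
or by type) centered at elements of the same type have the same cardinality. -/
theorem stmt9 {L : Type*} [Lattice L] [IsModularLattice L] [BoundedOrder L] [Fintype L]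
    (hsp : IsSemiPrimary L) (hen : Enumerable L)
    (u₁ u₂ : L) (φ : Multiset ℕ) (h₁ : IsTypeOf u₁ φ) (h₂ : IsTypeOf u₂ φ)
    (r l : ℕ) (μ : Multiset ℕ) (hμ : IsPartition μ) :
    (sphT u₁ r μ).ncard = (sphT u₂ r μ).ncard ∧
    (sphH u₁ r l).ncard = (sphH u₂ r l).ncard ∧
    (sph u₁ r).ncard = (sph u₂ r).ncard := by
  classical
  obtain ⟨hde, hue⟩ := hen
  have hncard : ∀ (s : Set L), s.ncard = ∑ v : L, (if v ∈ s then 1 else 0) := by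
    intro s
    rw [← Nat.card_coe_set_eq]
    rw [show Nat.card ↥s = Nat.card {w : L // w ∈ s} from rfl]
    rw [natCard_eq_filter (· ∈ s), Finset.card_filter]
  have hu1 : ht u₁ = φ.sum := ht_type h₁
  have hu2 : ht u₂ = φ.sum := ht_type h₂
  -- the distance condition as a height threshold, for elements of known height
  have hdist : ∀ (u v : L) (a : ℕ), ht u + ht v = a →
      (dLat u v ≤ r ↔ (a + 1 - r) / 2 ≤ ht (u ⊓ v)) := by
    intro u v a ha
    have hrank := ht_rank u v
    have h1 : ht (u ⊓ v) ≤ ht u := ht_mono inf_le_left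
    rw [dLat]
    omega
  -- Part 2 first (characteristic function by height)
  have hsphH : ∀ l' : ℕ, ∑ v : L, (if dLat u₁ v ≤ r ∧ ht v = l' then 1 else 0)
      = ∑ v : L, (if dLat u₂ v ≤ r ∧ ht v = l' then 1 else 0) := by
    intro l'
    set F : L → ℕ := fun v => if ht v = l' then 1 else 0 with hF
    have hFt : ∀ (v v' : L) (μ'' : Multiset ℕ), IsTypeOf v μ'' → IsTypeOf v' μ'' →
        F v = F v' := by
      intro v v' μ'' hv hv'
      have : ht v = ht v' := by rw [ht_type hv, ht_type hv']
      simp only [hF, this]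
    have htrans : ∀ u : L, ht u = φ.sum →
        (∑ v : L, (if dLat u v ≤ r ∧ ht v = l' then 1 else 0))
          = ∑ v : L, (if (φ.sum + l' + 1 - r) / 2 ≤ ht (u ⊓ v) then F v else 0) := by
      intro u hu
      refine Finset.sum_congr rfl fun v _ => ?_
      by_cases hl : ht v = l'
      · have hiff := hdist u v (φ.sum + l') (by omega)
        simp only [hF, eq_true hl, and_true, if_true]
        by_cases hd : dLat u v ≤ r
        · rw [if_pos hd, if_pos (hiff.mp hd)]
        · rw [if_neg hd, if_neg (fun hc => hd (hiff.mpr hc))]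
      · simp only [hF, hl, if_false, and_false, ite_self]
    rw [htrans u₁ hu1, htrans u₂ hu2]
    exact main_count hsp hde hue F hFt h₁ h₂ _
  refine ⟨?_, ?_, ?_⟩
  · -- sphT
    set F : L → ℕ := fun v => if IsTypeOf v μ then 1 else 0 with hF
    have hFt : ∀ (v v' : L) (μ'' : Multiset ℕ), IsTypeOf v μ'' → IsTypeOf v' μ'' →
        F v = F v' := by
      intro v v' μ'' hv hv'
      simp only [hF]
      by_cases hm : IsTypeOf v μ
      · rw [if_pos hm, if_pos (type_ext hde hv hm hv')]
      · rw [if_neg hm, if_neg (fun hm' => hm (type_ext hde hv' hm' hv))]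
    have htrans : ∀ u : L, ht u = φ.sum →
        (sphT u r μ).ncard
          = ∑ v : L, (if (φ.sum + μ.sum + 1 - r) / 2 ≤ ht (u ⊓ v) then F v else 0) := by
      intro u hu
      rw [hncard]
      refine Finset.sum_congr rfl fun v _ => ?_
      have hmem : (v ∈ sphT u r μ) = (dLat u v ≤ r ∧ IsTypeOf v μ) := rfl
      rw [hmem]
      by_cases hm : IsTypeOf v μ
      · have hiff := hdist u v (φ.sum + μ.sum) (by rw [hu, ht_type hm])
        simp only [hF, eq_true hm, and_true, if_true]
        by_cases hd : dLat u v ≤ r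
        · rw [if_pos hd, if_pos (hiff.mp hd)]
        · rw [if_neg hd, if_neg (fun hc => hd (hiff.mpr hc))]
      · simp only [hF, hm, if_false, and_false, ite_self]
    rw [htrans u₁ hu1, htrans u₂ hu2]
    exact main_count hsp hde hue F hFt h₁ h₂ _
  · -- sphH
    have htrans : ∀ u : L, (sphH u r l).ncard
        = ∑ v : L, (if dLat u v ≤ r ∧ ht v = l then 1 else 0) := by
      intro u
      rw [hncard]
      refine Finset.sum_congr rfl fun v _ => ?_
      by_cases h : dLat u v ≤ r ∧ ht v = l
      · rw [if_pos (show v ∈ sphH u r l from h), if_pos h]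
      · rw [if_neg (show v ∉ sphH u r l from h), if_neg h]
    rw [htrans u₁, htrans u₂]
    exact hsphH l
  · -- sph
    have htrans : ∀ u : L, (sph u r).ncard
        = ∑ l' ∈ Finset.range (ht (⊤ : L) + 1),
            ∑ v : L, (if dLat u v ≤ r ∧ ht v = l' then 1 else 0) := by
      intro u
      rw [hncard]
      rw [← Finset.sum_fiberwise_of_maps_to
        (g := fun v : L => ht v) (t := Finset.range (ht (⊤ : L) + 1))
        (fun v _ => Finset.mem_range.mpr (Nat.lt_succ_of_le (ht_mono le_top)))
        (fun v => if v ∈ sph u r then 1 else 0)]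
      refine Finset.sum_congr rfl fun l' _ => ?_
      rw [Finset.sum_filter]
      refine Finset.sum_congr rfl fun v _ => ?_
      by_cases hl : ht v = l'
      · rw [if_pos hl]
        by_cases hd : dLat u v ≤ r
        · rw [if_pos (show v ∈ sph u r from hd), if_pos (⟨hd, hl⟩ : dLat u v ≤ r ∧ ht v = l')]
        · rw [if_neg (show v ∉ sph u r from hd), if_neg (fun hc : dLat u v ≤ r ∧ ht v = l' => hd hc.1)]
      · rw [if_neg hl, if_neg (fun hc : dLat u v ≤ r ∧ ht v = l' => hl hc.2)]
    rw [htrans u₁, htrans u₂]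
    exact Finset.sum_congr rfl fun l' _ => hsphH l'
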